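/- arXiv:2201.08913 — 4 statements merged into one kernel-verified Lean document; each statement's English description precedes it below -/
import Mathlib

section
/- For any prime p, any n ≥ 1, and the polynomial C_{p^n}(x,y) = ((x+y)^{p^n} - x^{p^n} - y^{p^n})/p with integer coefficients, one has C_{p^n}(x,y) ≡ C_p(x^{p^{n-1}}, y^{p^{n-1}}) modulo p, as polynomials in ℤ[x,y]. -/
open MvPolynomial

/-- For a prime `p` and `n ≥ 1`, with `C_{p^m}(x,y) = ((x+y)^{p^m} - x^{p^m} - y^{p^m})/p`
(characterized by `p • Q = (x+y)^{p^m} - x^{p^m} - y^{p^m}` in `ℤ[x,y]`), one has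
`C_{p^n}(x,y) ≡ C_p(x^{p^{n-1}}, y^{p^{n-1}})` modulo `p`. -/
theorem stmt_2 (p n : ℕ) (hp : p.Prime) (hn : 1 ≤ n)
    (Qn Q1 : MvPolynomial (Fin 2) ℤ)
    (hQn : (p : ℤ) • Qn =
      (X 0 + X 1) ^ p ^ n - (X 0 : MvPolynomial (Fin 2) ℤ) ^ p ^ n - X 1 ^ p ^ n)
    (hQ1 : (p : ℤ) • Q1 =
      (X 0 + X 1) ^ p - (X 0 : MvPolynomial (Fin 2) ℤ) ^ p - X 1 ^ p) :
    MvPolynomial.map (Int.castRingHom (ZMod p)) Qn =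
      MvPolynomial.map (Int.castRingHom (ZMod p))
        (MvPolynomial.bind₁ (fun i : Fin 2 => (X i : MvPolynomial (Fin 2) ℤ) ^ p ^ (n - 1)) Q1) := by
  haveI : Fact p.Prime := ⟨hp⟩
  set f : Fin 2 → MvPolynomial (Fin 2) ℤ := fun i => (X i : MvPolynomial (Fin 2) ℤ) ^ p ^ (n - 1)
  set m := n - 1 with hm
  have hnm : n = m + 1 := (Nat.succ_pred_eq_of_pos hn).symm
  -- apply bind₁ f to hQ1
  have hQ1' : (p : ℤ) • (bind₁ f Q1) =
      (X 0 ^ p ^ m + X 1 ^ p ^ m) ^ p - (X 0 : MvPolynomial (Fin 2) ℤ) ^ p ^ n - X 1 ^ p ^ n := by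
    have := congrArg (bind₁ f) hQ1
    simp only [map_sub, map_add, map_pow, map_smul, bind₁_X_right] at this
    rw [this]
    have hpn : p ^ m * p = p ^ n := by rw [hnm, pow_succ]
    simp only [f, ← pow_mul, ← hm, hpn]
  -- A - B divisible by p
  have hAB : (C (p : ℤ) : MvPolynomial (Fin 2) ℤ) ∣
      ((X 0 + X 1) ^ p ^ m - ((X 0 : MvPolynomial (Fin 2) ℤ) ^ p ^ m + X 1 ^ p ^ m)) := by
    rw [C_dvd_iff_zmod]
    simp only [map_sub, map_add, map_pow, map_X]
    rw [add_pow_char_pow]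
    ring
  have key : (C (p : ℤ) : MvPolynomial (Fin 2) ℤ) ^ 2 ∣
      ((X 0 + X 1) ^ p ^ n - (X 0 ^ p ^ m + X 1 ^ p ^ m) ^ p) := by
    have h2 := dvd_sub_pow_of_dvd_sub (p := p) (a := (X 0 + X 1) ^ p ^ m)
      (b := (X 0 : MvPolynomial (Fin 2) ℤ) ^ p ^ m + X 1 ^ p ^ m) (by rwa [C_eq_coe_nat] at hAB) 1
    simpa [← pow_mul, pow_one, hnm, pow_succ, C_eq_coe_nat, Nat.cast_pow] using h2
  -- hence p ∣ Qn - bind₁ f Q1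
  have hdvd : (C (p : ℤ) : MvPolynomial (Fin 2) ℤ) ∣ (Qn - bind₁ f Q1) := by
    have hmul : (C (p : ℤ) : MvPolynomial (Fin 2) ℤ) * (Qn - bind₁ f Q1) =
        (X 0 + X 1) ^ p ^ n - (X 0 ^ p ^ m + X 1 ^ p ^ m) ^ p := by
      rw [mul_sub]
      have e1 : (C (p : ℤ) : MvPolynomial (Fin 2) ℤ) * Qn = (p : ℤ) • Qn := by
        rw [zsmul_eq_mul]; norm_cast
      have e2 : (C (p : ℤ) : MvPolynomial (Fin 2) ℤ) * bind₁ f Q1 = (p : ℤ) • bind₁ f Q1 := by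
        rw [zsmul_eq_mul]; norm_cast
      rw [e1, e2, hQn, hQ1']
      ring
    have hC0 : (C (p : ℤ) : MvPolynomial (Fin 2) ℤ) ≠ 0 := by
      simp [C_eq_zero, hp.ne_zero]
    rw [← hmul, sq] at key
    exact (mul_dvd_mul_iff_left hC0).mp key
  rw [← sub_eq_zero, ← map_sub, ← C_dvd_iff_zmod]
  exact hdvd
end

section
/- Let f(x) = x + a x^{p^{h-1}} + b x^{p^h} (mod x^{p^{h+1}}) be a power series over a commutative Q-algebra, with h > 2. Then its compositional inverse g satisfies, modulo x^{p^h + 1}: g(x) = x + Σ_{j=0}^{p-1} ((-1)^{j+1}/(j+1)) · C(p^{h-1}(j+1), j) · a^{j+1} · x^{j(p^{h-1}-1) + p^{h-1}} - b x^{p^h}. -/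
open PowerSeries

/-- Composition `g ∘ f` of power series, valid when `f` has zero constant term:
the coefficient of `x^k` in `g(f(x))` is `Σ_{n ≤ k} (coeff n g) · coeff k (f^n)`. -/
noncomputable def psComp {R : Type*} [CommRing R] (g f : PowerSeries R) : PowerSeries R :=
  PowerSeries.mk fun k =>
    ∑ n ∈ Finset.range (k + 1), PowerSeries.coeff (R := R) n g * PowerSeries.coeff (R := R) k (f ^ n)

section Aux
variable {R : Type*} [CommRing R] [Algebra ℚ R]

lemma cancel_nat_succ (n : ℕ) (x : R) (h : ((n : R) + 1) * x = 0) : x = 0 := by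
  have hc : ((n : R) + 1) = algebraMap ℚ R ((n : ℚ) + 1) := by simp
  have hinv : algebraMap ℚ R (((n : ℚ) + 1)⁻¹) * ((n : R) + 1) = 1 := by
    rw [hc, ← map_mul, inv_mul_cancel₀ (by positivity), map_one]
  calc x = (algebraMap ℚ R (((n : ℚ) + 1)⁻¹) * ((n : R) + 1)) * x := by rw [hinv, one_mul]
  _ = algebraMap ℚ R (((n : ℚ) + 1)⁻¹) * (((n : R) + 1) * x) := by ring
  _ = 0 := by rw [h, mul_zero]

lemma key_residue (u : R⟦X⟧) (hu : constantCoeff (R := R) u = 1) (n : ℕ) :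
    coeff (R := R) (n+1) ((invOfUnit u 1)^(n+2) * (u + X * (d⁄dX R u))) = 0 := by
  set v := invOfUnit u 1 with hv
  have huv : u * v = 1 := mul_invOfUnit u 1 (by simpa using hu)
  have hDv : d⁄dX R v = -(v^2 * d⁄dX R u) := by
    have h0 : (d⁄dX R) (u * v) = 0 := by rw [huv]; exact Derivation.map_one_eq_zero _
    rw [Derivation.leibniz] at h0
    simp only [smul_eq_mul] at h0
    linear_combination v * h0 - (d⁄dX R v) * huv
  have hDA : (d⁄dX R) (v^(n+1)) = (n+1) • (-(v^(n+2) * d⁄dX R u)) := by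
    rw [Derivation.leibniz_pow, hDv]
    simp only [Nat.add_sub_cancel, smul_eq_mul]
    ring_nf
  have h1 : coeff (R := R) (n+1) (v^(n+2) * (u + X * d⁄dX R u))
      = coeff (R := R) (n+1) (v^(n+1)) + coeff (R := R) n (v^(n+2) * d⁄dX R u) := by
    have e1 : v^(n+2) * (u + X * d⁄dX R u) = v^(n+1) * (u * v) + X * (v^(n+2) * d⁄dX R u) := by
      ring
    rw [e1, huv, mul_one, map_add, coeff_succ_X_mul]
  have h2 : coeff (R := R) n ((d⁄dX R) (v^(n+1))) = coeff (R := R) (n+1) (v^(n+1)) * ((n : R)+1) := by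
    have := coeff_derivative (v^(n+1)) n
    simpa using this
  have h3 : coeff (R := R) n ((d⁄dX R) (v^(n+1))) = -(((n : R)+1) * coeff (R := R) n (v^(n+2) * d⁄dX R u)) := by
    rw [hDA, map_nsmul, map_neg]
    push_cast
    ring
  have h4 : (((n : R)) + 1) * (coeff (R := R) (n+1) (v^(n+1)) + coeff (R := R) n (v^(n+2) * d⁄dX R u)) = 0 := by
    rw [h2] at h3
    linear_combination h3
  rw [h1]
  exact cancel_nat_succ n _ h4

/-- partial sums of the negative binomial series -/
noncomputable def nbT (e : R⟦X⟧) (N K : ℕ) : R⟦X⟧ :=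
  ∑ n ∈ Finset.range (N+1), C (R := R) ((-1)^n * ((K+n).choose n : R)) * e^n

lemma nbT_succ_mul (e : R⟦X⟧) (N K : ℕ) :
    nbT e N (K+1) * (1+e) = nbT e N K + C (R := R) ((-1)^N * ((K+1+N).choose N : R)) * e^(N+1) := by
  have h2 : nbT e N (K+1) * e
      = ∑ n ∈ Finset.range N, C (R := R) ((-1)^n * ((K+1+n).choose n : R)) * e^(n+1)
        + C (R := R) ((-1)^N * ((K+1+N).choose N : R)) * e^(N+1) := by
    rw [nbT, Finset.sum_mul, ← Finset.sum_range_succ (fun n => C (R := R) ((-1)^n * ((K+1+n).choose n : R)) * e^(n+1))]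
    exact Finset.sum_congr rfl (fun n _ => by ring)
  have h1 : nbT e N (K+1)
      = C (R := R) 1 + ∑ n ∈ Finset.range N, C (R := R) ((-1)^(n+1) * ((K+1+(n+1)).choose (n+1) : R)) * e^(n+1) := by
    rw [nbT, Finset.sum_range_succ' (fun n => C (R := R) ((-1)^n * ((K+1+n).choose n : R)) * e^n)]
    simp [add_comm]
  have h0 : nbT e N K
      = C (R := R) 1 + ∑ n ∈ Finset.range N, C (R := R) ((-1)^(n+1) * ((K+(n+1)).choose (n+1) : R)) * e^(n+1) := by
    rw [nbT, Finset.sum_range_succ' (fun n => C (R := R) ((-1)^n * ((K+n).choose n : R)) * e^n)]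
    simp [add_comm]
  rw [mul_add, mul_one, h2, h1, h0]
  have hpair : ∀ n ∈ Finset.range N,
      C (R := R) ((-1)^(n+1) * ((K+1+(n+1)).choose (n+1) : R)) * e^(n+1)
        + C (R := R) ((-1)^n * ((K+1+n).choose n : R)) * e^(n+1)
      = C (R := R) ((-1)^(n+1) * ((K+(n+1)).choose (n+1) : R)) * e^(n+1) := by
    intro n _
    rw [← add_mul, ← map_add]
    congr 1
    have hch : (K+1+(n+1)).choose (n+1) = (K+1+n).choose n + (K+1+n).choose (n+1) := by
      exact Nat.choose_succ_succ (K+1+n) n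
    have hch2 : (K+(n+1)).choose (n+1) = (K+1+n).choose (n+1) := by
      congr 1
      omega
    rw [hch, hch2]
    push_cast
    ring
  rw [← Finset.sum_add_distrib.symm.trans (Finset.sum_congr rfl hpair)]
  ring

lemma nbT_mul_pow (e : R⟦X⟧) (N : ℕ) :
    ∀ K, ∃ w : R⟦X⟧, nbT e N K * (1+e)^(K+1) = 1 + e^(N+1) * w := by
  intro K
  induction K with
  | zero =>
    refine ⟨(-1)^N, ?_⟩
    have hg := geom_sum_mul (-e) (N+1)
    have hT : nbT e N 0 = ∑ n ∈ Finset.range (N+1), (-e)^n := by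
      rw [nbT]
      refine Finset.sum_congr rfl (fun n _ => ?_)
      rw [neg_pow]
      simp [map_pow, map_neg]
      ring
    rw [hT, pow_one]
    linear_combination (-1 : R⟦X⟧) * hg
  | succ K ih =>
    obtain ⟨w, hw⟩ := ih
    refine ⟨w + C (R := R) ((-1)^N * ((K+1+N).choose N : R)) * (1+e)^(K+1), ?_⟩
    have : nbT e N (K+1) * (1+e)^(K+2) = (nbT e N (K+1) * (1+e)) * (1+e)^(K+1) := by ring
    rw [this, nbT_succ_mul, add_mul, hw]
    ring

lemma inv_pow_eq' (u Z : R⟦X⟧) (hu : constantCoeff (R := R) u = 1) (K : ℕ)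
    (hZ : Z * u^K = 1) : Z = (invOfUnit u 1)^K := by
  have huv : u * invOfUnit u 1 = 1 := mul_invOfUnit u 1 (by simpa using hu)
  calc Z = Z * (u * invOfUnit u 1)^K := by rw [huv]; ring
  _ = (Z * u^K) * (invOfUnit u 1)^K := by rw [mul_pow]; ring
  _ = (invOfUnit u 1)^K := by rw [hZ, one_mul]

lemma coeff_inv_pow_monomial (a : R) (s K M : ℕ) (hs : 1 ≤ s) :
    coeff (R := R) M ((invOfUnit (1 + C (R := R) a * X^s) 1)^(K+1)) =
      if s ∣ M then ((-1)^(M/s) * ((K + M/s).choose (M/s) : R)) * a^(M/s) else 0 := by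
  set e : R⟦X⟧ := C (R := R) a * X^s with he
  have hconst : constantCoeff (R := R) (1 + e) = 1 := by
    rw [he]
    simp [constantCoeff_X, zero_pow (by omega : s ≠ 0)]
  set v := invOfUnit (1+e) 1 with hv
  have huv : (1+e) * v = 1 := mul_invOfUnit _ 1 (by simpa using hconst)
  obtain ⟨w, hw⟩ := nbT_mul_pow e M K
  have hvp : v^(K+1) * (1+e)^(K+1) = 1 := by rw [← mul_pow, mul_comm v, huv, one_pow]
  have hnbT : nbT e M K = v^(K+1) + e^(M+1) * (w * v^(K+1)) := by
    calc nbT e M K = (nbT e M K * (1+e)^(K+1)) * v^(K+1) := by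
          rw [mul_assoc, mul_comm ((1+e)^(K+1)), hvp, mul_one]
    _ = (1 + e^(M+1) * w) * v^(K+1) := by rw [hw]
    _ = v^(K+1) + e^(M+1) * (w * v^(K+1)) := by ring
  have hetop : coeff (R := R) M (e^(M+1) * (w * v^(K+1))) = 0 := by
    rw [he, mul_pow, ← map_pow, ← pow_mul, mul_assoc, coeff_C_mul, coeff_X_pow_mul']
    rw [if_neg (by nlinarith), mul_zero]
  have hcoeff : coeff (R := R) M (v^(K+1)) = coeff (R := R) M (nbT e M K) := by
    rw [hnbT, map_add, hetop, add_zero]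
  rw [hcoeff, nbT, map_sum]
  have hterm : ∀ n, coeff (R := R) M (C (R := R) ((-1)^n * ((K+n).choose n : R)) * e^n)
      = if M = s*n then ((-1)^n * ((K+n).choose n : R)) * a^n else 0 := by
    intro n
    rw [he, mul_pow, ← map_pow, ← pow_mul, ← mul_assoc, ← map_mul, coeff_C_mul_X_pow]
  by_cases hdvd : s ∣ M
  · obtain ⟨t, ht⟩ := hdvd
    have htM : t ≤ M := by nlinarith
    have hts : M / s = t := by rw [ht]; exact Nat.mul_div_cancel_left t (by omega)
    rw [Finset.sum_eq_single_of_mem t (Finset.mem_range.2 (by omega))]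
    · rw [hterm, if_pos ht, if_pos ⟨t, ht⟩, hts]
    · intro n _ hne
      rw [hterm, if_neg (by rw [ht]; intro hc; exact hne (by nlinarith))]
  · rw [if_neg hdvd]
    refine Finset.sum_eq_zero (fun n _ => ?_)
    rw [hterm, if_neg (fun hc => hdvd ⟨n, hc⟩)]

lemma X_mul_derivative_pow (c : R) (s : ℕ) (hs : 1 ≤ s) :
    X * (d⁄dX R) (C (R := R) c * X^s) = (s : R⟦X⟧) * (C (R := R) c * X^s) := by
  rw [Derivation.leibniz, derivative_C, smul_zero, add_zero, Derivation.leibniz_pow,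
    derivative_X, smul_eq_mul, nsmul_eq_mul, smul_eq_mul, mul_one]
  have : X * (X : R⟦X⟧)^(s-1) = X^s := by
    rw [← pow_succ']
    congr 1
    omega
  push_cast
  calc X * (C (R := R) c * ((s : R⟦X⟧) * X^(s-1))) = (s : R⟦X⟧) * (C (R := R) c * (X * X^(s-1))) := by ring
  _ = (s : R⟦X⟧) * (C (R := R) c * X^s) := by rw [this]

lemma coeff_pow_congr {f1 f2 : R⟦X⟧} {N : ℕ} (h : ∀ i ≤ N, coeff (R := R) i f1 = coeff (R := R) i f2)
    (m : ℕ) : ∀ j ≤ N, coeff (R := R) j (f1^m) = coeff (R := R) j (f2^m) := by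
  induction m with
  | zero => intro j _; rfl
  | succ m ih =>
    intro j hj
    rw [pow_succ, pow_succ, coeff_mul, coeff_mul]
    refine Finset.sum_congr rfl (fun p hp => ?_)
    have hp' := Finset.HasAntidiagonal.mem_antidiagonal.1 hp
    rw [ih p.1 (by omega), h p.2 (by omega)]

lemma coeff_g_eq (u : R⟦X⟧) (hu : constantCoeff (R := R) u = 1) (g f : R⟦X⟧) (P : ℕ)
    (hfc : ∀ i ≤ P, coeff (R := R) i f = coeff (R := R) i (X * u))
    (hgf : psComp g f = X) (k : ℕ) (hk1 : 1 ≤ k) (hkP : k ≤ P) :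
    coeff (R := R) k g
      = coeff (R := R) (k-1) ((invOfUnit u 1)^(k+1) * (u + X * (d⁄dX R u))) := by
  set v := invOfUnit u 1 with hv
  have huv : u * v = 1 := mul_invOfUnit u 1 (by simpa using hu)
  set D := u + X * (d⁄dX R u) with hD
  set G : R⟦X⟧ := ∑ m ∈ Finset.range (k+1), C (R := R) (coeff (R := R) m g) * (X*u)^m with hG
  -- coefficients of (X*u)^m vanish below m
  have horder : ∀ m j : ℕ, j < m → coeff (R := R) j ((X*u)^m) = 0 := by
    intro m j hjm
    rw [mul_pow, coeff_X_pow_mul', if_neg (by omega)]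
  -- Step A
  have hA : ∀ j ≤ k, coeff (R := R) j G = if j = 1 then 1 else 0 := by
    intro j hj
    have h1 : coeff (R := R) j G
        = ∑ m ∈ Finset.range (k+1), coeff (R := R) m g * coeff (R := R) j ((X*u)^m) := by
      rw [hG, map_sum]
      exact Finset.sum_congr rfl (fun m _ => by rw [coeff_C_mul])
    have h2 : ∑ m ∈ Finset.range (k+1), coeff (R := R) m g * coeff (R := R) j ((X*u)^m)
        = ∑ m ∈ Finset.range (j+1), coeff (R := R) m g * coeff (R := R) j ((X*u)^m) := by
      symm
      refine Finset.sum_subset (by intro x hx; simp at hx ⊢; omega) ?_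
      intro m _ hm
      simp only [Finset.mem_range, not_lt] at hm
      rw [horder m j (by omega), mul_zero]
    have h3 : ∑ m ∈ Finset.range (j+1), coeff (R := R) m g * coeff (R := R) j ((X*u)^m)
        = ∑ m ∈ Finset.range (j+1), coeff (R := R) m g * coeff (R := R) j (f^m) := by
      refine Finset.sum_congr rfl (fun m _ => ?_)
      rw [coeff_pow_congr (N := P) hfc m j (by omega)]
    have h4 : coeff (R := R) j (psComp g f) = coeff (R := R) j X := by rw [hgf]
    rw [psComp, coeff_mk] at h4
    rw [h1, h2, h3, h4, coeff_X]
  -- Step B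
  have hB : coeff (R := R) k (G * (v^(k+1) * D)) = coeff (R := R) (k-1) (v^(k+1) * D) := by
    rw [coeff_mul]
    rw [Finset.sum_eq_single_of_mem (1, k-1)
        (Finset.HasAntidiagonal.mem_antidiagonal.2 (by omega))]
    · rw [hA 1 hk1, if_pos rfl, one_mul]
    · intro p hp hne
      have hp' := Finset.HasAntidiagonal.mem_antidiagonal.1 hp
      have : p.1 ≠ 1 := by
        intro hc; apply hne
        have : p.2 = k - 1 := by omega
        exact Prod.ext hc this
      rw [hA p.1 (by omega), if_neg this, zero_mul]
  -- Step C
  have hC : coeff (R := R) k (G * (v^(k+1) * D)) = coeff (R := R) k g := by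
    have hGm : G * (v^(k+1) * D)
        = ∑ m ∈ Finset.range (k+1), C (R := R) (coeff (R := R) m g) * (X^m * (v^(k+1-m) * D)) := by
      rw [hG, Finset.sum_mul]
      refine Finset.sum_congr rfl (fun m hm => ?_)
      have hm' := Finset.mem_range.1 hm
      have hpow : u^m * v^(k+1) = v^(k+1-m) := by
        have : v^(k+1) = v^m * v^(k+1-m) := by rw [← pow_add]; congr 1; omega
        rw [this, ← mul_assoc, ← mul_pow, huv, one_pow, one_mul]
      calc C (R := R) (coeff (R := R) m g) * (X*u)^m * (v^(k+1) * D)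
          = C (R := R) (coeff (R := R) m g) * (X^m * ((u^m * v^(k+1)) * D)) := by rw [mul_pow]; ring
        _ = C (R := R) (coeff (R := R) m g) * (X^m * (v^(k+1-m) * D)) := by rw [hpow]
    rw [hGm, map_sum]
    rw [Finset.sum_eq_single_of_mem k (Finset.mem_range.2 (by omega))]
    · have h1 : k + 1 - k = 1 := by omega
      rw [h1, coeff_C_mul, coeff_X_pow_mul', if_pos (le_refl k), Nat.sub_self,
        coeff_zero_eq_constantCoeff, map_mul, pow_one]
      have hcv : constantCoeff (R := R) v = 1 := by
        rw [hv, constantCoeff_invOfUnit]; rfl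
      have hcD : constantCoeff (R := R) D = 1 := by
        rw [hD, map_add, map_mul, constantCoeff_X, zero_mul, add_zero, hu]
      rw [hcv, hcD, mul_one, mul_one]
    · intro m hm hne
      have hm' := Finset.mem_range.1 hm
      rw [coeff_C_mul, coeff_X_pow_mul', if_pos (by omega)]
      have hkey := key_residue u hu (k-m-1)
      rw [← hv, ← hD] at hkey
      rw [show k-m = (k-m-1)+1 by omega, show k+1-m = (k-m-1)+2 by omega, hkey, mul_zero]
  rw [← hC, hB]

lemma coeff_vD (a b : R) (s r k : ℕ) (hs : 1 ≤ s) (hsr : s < r) (hk1 : 1 ≤ k)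
    (hkr : k ≤ r + 1) (u ua : R⟦X⟧)
    (hua_def : ua = 1 + C (R := R) a * X^s) (hu_def : u = ua + C (R := R) b * X^r) :
    coeff (R := R) (k-1) ((invOfUnit u 1)^(k+1) * (u + X * (d⁄dX R u))) =
    (if s ∣ (k-1) then ((-1)^((k-1)/s) * ((k + (k-1)/s).choose ((k-1)/s) : R)) * a^((k-1)/s) else 0)
    + (if s ∣ (k-1) ∧ s ≤ k-1 then
        ((s:R)+1) * a * (((-1)^((k-1-s)/s) * ((k + (k-1-s)/s).choose ((k-1-s)/s) : R)) * a^((k-1-s)/s)) else 0)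
    + (if k = r+1 then -b else 0) := by
  have hr : 1 ≤ r := by omega
  set va : R⟦X⟧ := invOfUnit ua 1 with hva_def
  have hXs0 : constantCoeff (R := R) ((X : R⟦X⟧)^s) = 0 := by
    rw [map_pow, constantCoeff_X, zero_pow (by omega : s ≠ 0)]
  have hXr0 : constantCoeff (R := R) ((X : R⟦X⟧)^r) = 0 := by
    rw [map_pow, constantCoeff_X, zero_pow (by omega : r ≠ 0)]
  have hcua : constantCoeff (R := R) ua = 1 := by
    rw [hua_def, map_add, map_one, map_mul, hXs0, mul_zero, add_zero]
  have hcu : constantCoeff (R := R) u = 1 := by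
    rw [hu_def, map_add, hcua, map_mul, hXr0, mul_zero, add_zero]
  have huava : ua * va = 1 := mul_invOfUnit ua 1 (by simpa using hcua)
  have hcva : constantCoeff (R := R) va = 1 := by
    have h := congrArg (constantCoeff (R := R)) huava
    rw [map_mul, hcua, one_mul, map_one] at h
    exact h
  set c : R⟦X⟧ := C (R := R) b * va with hc_def
  set eb : R⟦X⟧ := X^r * c with heb_def
  have hceb : constantCoeff (R := R) eb = 0 := by
    rw [heb_def, map_mul, hXr0, zero_mul]
  set w : R⟦X⟧ := invOfUnit (1 + eb) 1 with hw_def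
  have hebw : (1 + eb) * w = 1 := mul_invOfUnit _ 1 (by simp [hceb])
  have hfac : u = ua * (1 + eb) := by
    have h1 : ua * (1 + eb) = ua + (ua * va) * (C (R := R) b * X^r) := by
      rw [heb_def, hc_def]; ring
    rw [h1, huava, one_mul, hu_def]
  have hvpow : (invOfUnit u 1)^(k+1) = va^(k+1) * w^(k+1) := by
    refine (inv_pow_eq' u (va^(k+1) * w^(k+1)) hcu (k+1) ?_).symm
    rw [hfac, ← mul_pow, ← mul_pow]
    have h2 : va * w * (ua * (1 + eb)) = (ua * va) * ((1 + eb) * w) := by ring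
    rw [h2, huava, hebw, one_mul, one_pow]
  -- explicit form of the derivative part
  set Dexp : R⟦X⟧ := 1 + C (R := R) (((s:R)+1)*a) * X^s + C (R := R) (((r:R)+1)*b) * X^r with hDexp_def
  have hcD : constantCoeff (R := R) Dexp = 1 := by
    rw [hDexp_def]
    simp [hXs0, hXr0]
  have hD : u + X * (d⁄dX R u) = Dexp := by
    have hdu : X * (d⁄dX R u) = (s : R⟦X⟧) * (C (R := R) a * X^s) + (r : R⟦X⟧) * (C (R := R) b * X^r) := by
      rw [hu_def, hua_def, map_add, map_add, Derivation.map_one_eq_zero, zero_add, mul_add,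
        X_mul_derivative_pow a s hs, X_mul_derivative_pow b r hr]
    rw [hdu, hDexp_def, hu_def, hua_def]
    have hcs : (s : R⟦X⟧) = C (R := R) ((s:R)) := by rw [map_natCast]
    have hcr : (r : R⟦X⟧) = C (R := R) ((r:R)) := by rw [map_natCast]
    rw [hcs, hcr, map_mul, map_mul, map_add, map_add]
    simp only [map_one]
    ring
  -- truncation of w^(k+1)
  obtain ⟨w2, hw2⟩ := nbT_mul_pow eb 1 k
  have hnbT1 : nbT eb 1 k = 1 - C (R := R) ((k:R)+1) * eb := by
    rw [nbT, Finset.sum_range_succ, Finset.sum_range_succ, Finset.sum_range_zero, zero_add]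
    have h1 : ((-1:R)^0 * ((k+0).choose 0 : R)) = 1 := by norm_num
    have h2 : ((-1:R)^1 * ((k+1).choose 1 : R)) = -((k:R)+1) := by
      rw [Nat.choose_one_right]
      push_cast
      ring
    rw [h1, h2, map_one, map_neg]
    ring
  have hwpow : w^(k+1) = (1 - C (R := R) ((k:R)+1) * eb) - eb^2 * (w2 * w^(k+1)) := by
    rw [← hnbT1]
    calc w^(k+1) = (1 + eb^2*w2) * w^(k+1) - eb^2*(w2*w^(k+1)) := by ring
    _ = (nbT eb 1 k * (1+eb)^(k+1)) * w^(k+1) - eb^2*(w2*w^(k+1)) := by rw [hw2]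
    _ = nbT eb 1 k * ((1+eb)*w)^(k+1) - eb^2*(w2*w^(k+1)) := by rw [mul_pow (1+eb) w (k+1)]; ring
    _ = nbT eb 1 k - eb^2*(w2*w^(k+1)) := by rw [hebw, one_pow, mul_one]
  -- high-order vanishing
  have hhigh : coeff (R := R) (k-1) (eb^2 * (w2 * w^(k+1) * va^(k+1) * Dexp)) = 0 := by
    have h1 : eb^2 * (w2 * w^(k+1) * va^(k+1) * Dexp)
        = X^r * (X^r * (c^2 * (w2 * w^(k+1) * va^(k+1) * Dexp))) := by rw [heb_def]; ring
    rw [h1, coeff_X_pow_mul']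
    by_cases h2 : r ≤ k - 1
    · rw [if_pos h2, coeff_X_pow_mul', if_neg (by omega)]
    · rw [if_neg h2]
  -- coefficient of va^(k+1) at index M
  have hva_coeff : ∀ M : ℕ, coeff (R := R) M (va^(k+1)) =
      if s ∣ M then ((-1)^(M/s) * ((k + M/s).choose (M/s) : R)) * a^(M/s) else 0 := by
    intro M
    rw [hva_def, hua_def]
    exact coeff_inv_pow_monomial a s k M hs
  have hva0 : coeff (R := R) 0 (va^(k+1)) = 1 := by
    rw [coeff_zero_eq_constantCoeff, map_pow, hcva, one_pow]
  -- remaining pieces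
  have hterm2 : coeff (R := R) (k-1) (C (R := R) ((k:R)+1) * (X^r * (c * (va^(k+1) * Dexp))))
      = if k = r+1 then ((k:R)+1) * b else 0 := by
    rw [coeff_C_mul, coeff_X_pow_mul']
    by_cases h2 : k = r + 1
    · have h3 : k - 1 - r = 0 := by omega
      rw [if_pos (by omega : r ≤ k - 1), h3, coeff_zero_eq_constantCoeff, if_pos h2]
      rw [map_mul, hc_def, map_mul, hcva, map_mul]
      rw [show constantCoeff (R := R) (va ^ (k+1)) = 1 from by rw [map_pow, hcva, one_pow], hcD]
      rw [constantCoeff_C]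
      ring
    · rw [if_neg (by omega), if_neg h2, mul_zero]
  have hterm1 : coeff (R := R) (k-1) (va^(k+1) * Dexp)
      = coeff (R := R) (k-1) (va^(k+1))
        + (((s:R)+1)*a) * (if s ≤ k-1 then coeff (R := R) (k-1-s) (va^(k+1)) else 0)
        + (if k = r+1 then ((r:R)+1)*b else 0) := by
    have hexp : va^(k+1) * Dexp = va^(k+1) + C (R := R) (((s:R)+1)*a) * (X^s * va^(k+1))
        + C (R := R) (((r:R)+1)*b) * (X^r * va^(k+1)) := by
      rw [hDexp_def]; ring
    rw [hexp, map_add, map_add, coeff_C_mul, coeff_C_mul, coeff_X_pow_mul', coeff_X_pow_mul']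
    congr 1
    by_cases h2 : r ≤ k - 1
    · have hk2 : k = r + 1 := by omega
      have h3 : k - 1 - r = 0 := by omega
      rw [if_pos h2, h3, hva0, if_pos hk2, mul_one]
    · rw [if_neg h2, if_neg (by omega), mul_zero]
  have hsecond : (((s:R)+1)*a) * (if s ≤ k-1 then coeff (R := R) (k-1-s) (va^(k+1)) else 0)
      = (if s ∣ (k-1) ∧ s ≤ k-1 then
        ((s:R)+1) * a * (((-1)^((k-1-s)/s) * ((k + (k-1-s)/s).choose ((k-1-s)/s) : R)) * a^((k-1-s)/s)) else 0) := by
    by_cases h2 : s ≤ k-1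
    · rw [if_pos h2, hva_coeff]
      by_cases h3 : s ∣ (k-1)
      · have h4 : s ∣ (k-1-s) := Nat.dvd_sub h3 dvd_rfl
        rw [if_pos h4, if_pos ⟨h3, h2⟩]
      · have h4 : ¬ s ∣ (k-1-s) := by
          intro hc
          refine h3 ?_
          have h5 : k - 1 = (k-1-s) + s := by omega
          rw [h5]
          exact Nat.dvd_add hc dvd_rfl
        rw [if_neg h4, if_neg (by tauto), mul_zero]
    · rw [if_neg h2, if_neg (by tauto), mul_zero]
  -- main computation
  have hsplit : va^(k+1) * ((1 - C (R := R) ((k:R)+1) * eb) - eb^2 * (w2 * w^(k+1))) * Dexp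
      = va^(k+1) * Dexp
        - C (R := R) ((k:R)+1) * (X^r * (c * (va^(k+1) * Dexp)))
        - eb^2 * (w2 * w^(k+1) * va^(k+1) * Dexp) := by
    rw [heb_def, hc_def]; ring
  rw [hD, hvpow, hwpow, hsplit, map_sub, map_sub, hhigh, sub_zero, hterm2, hterm1,
    hva_coeff (k-1), hsecond]
  by_cases hk2 : k = r + 1
  · rw [if_pos hk2, if_pos hk2, if_pos hk2]
    have hcast : (k : R) = (r:R)+1 := by rw [hk2]; push_cast; ring
    rw [hcast]
    ring
  · rw [if_neg hk2, if_neg hk2, if_neg hk2]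
    ring

lemma binom_id (q t' : ℕ) (hq : 1 ≤ q) :
    (((t'+1)*q+1).choose (t'+1) : ℚ) - q * (((t'+1)*q).choose t')
      = (((t'+1)*q).choose t' : ℚ) / (t'+1) := by
  set n := (t'+1)*q with hn
  have htn : t' + 1 ≤ n := by
    calc t' + 1 = (t'+1)*1 := by ring
    _ ≤ (t'+1)*q := Nat.mul_le_mul_left _ hq
  have hpascal : (n+1).choose (t'+1) = n.choose t' + n.choose (t'+1) :=
    Nat.choose_succ_succ n t'
  have hkey := Nat.choose_succ_right_eq n t'
  have hkeyQ : (n.choose (t'+1) : ℚ) * ((t':ℚ)+1) = (n.choose t' : ℚ) * ((n:ℚ) - t') := by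
    have := congrArg (fun x : ℕ => (x : ℚ)) hkey
    push_cast [Nat.cast_sub (by omega : t' ≤ n)] at this
    convert this using 2 <;> push_cast <;> ring
  have hnq : (n : ℚ) = ((t':ℚ)+1) * q := by rw [hn]; push_cast; ring
  rw [hpascal]
  push_cast
  rw [eq_div_iff (show ((t':ℚ)+1) ≠ 0 by positivity)]
  linear_combination hkeyQ + (n.choose t' : ℚ) * hnq


lemma scalar_id (a : R) (q t' : ℕ) (hq : 1 ≤ q) :
    ((-1:R)^(t'+1) * (((t'+1)*q+1).choose (t'+1) : R)) * a^(t'+1)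
      + (q:R) * a * (((-1:R)^t' * (((t'+1)*q).choose t' : R)) * a^t')
    = algebraMap ℚ R ((-1:ℚ)^(t'+1) / ((t':ℚ)+1) * ((q*(t'+1)).choose t' : ℚ)) * a^(t'+1) := by
  have hQ : (-1:ℚ)^(t'+1) / ((t':ℚ)+1) * ((q*(t'+1)).choose t' : ℚ)
      = (-1:ℚ)^(t'+1) * (((((t'+1)*q+1).choose (t'+1)) : ℚ) - q * (((t'+1)*q).choose t')) := by
    rw [mul_comm q (t'+1), binom_id q t' hq]
    push_cast
    ring
  rw [hQ]
  simp only [map_mul, map_sub, map_pow, map_neg, map_one, map_natCast]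
  push_cast
  ring

end Aux

/-- Let `f(x) = x + a x^{p^{h-1}} + b x^{p^h}` mod `x^{p^{h+1}}` over a commutative
`ℚ`-algebra, with `h > 2`. Then its compositional inverse `g` satisfies, mod `x^{p^h+1}`:
`g(x) = x + Σ_{j=0}^{p-1} ((-1)^{j+1}/(j+1)) C(p^{h-1}(j+1), j) a^{j+1}
  x^{j(p^{h-1}-1)+p^{h-1}} - b x^{p^h}`. -/
theorem stmt_5 {R : Type*} [CommRing R] [Algebra ℚ R] (p h : ℕ) (hp : p.Prime)
    (hh : 2 < h) (a b : R) (f g : PowerSeries R)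
    (hf : ∀ k < p ^ (h + 1), PowerSeries.coeff (R := R) k f =
      PowerSeries.coeff (R := R) k (X + C (R := R) a * X ^ p ^ (h - 1) + C (R := R) b * X ^ p ^ h))
    (hg0 : constantCoeff (R := R) g = 0)
    (hgf : psComp g f = X) (hfg : psComp f g = X) :
    ∀ k ≤ p ^ h, PowerSeries.coeff (R := R) k g =
      PowerSeries.coeff (R := R) k
        (X + (∑ j ∈ Finset.range p,
            C (R := R) (algebraMap ℚ R ((-1 : ℚ) ^ (j + 1) / (j + 1) *
                ((p ^ (h - 1) * (j + 1)).choose j : ℚ)) * a ^ (j + 1)) *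
              X ^ (j * (p ^ (h - 1) - 1) + p ^ (h - 1)))
          - C (R := R) b * X ^ p ^ h) := by
  intro k hk
  have hp2 : 2 ≤ p := hp.two_le
  set q := p^(h-1) with hq_def
  have hq2 : p*p ≤ q := by
    calc p*p = p^2 := by ring
    _ ≤ p^(h-1) := Nat.pow_le_pow_right (by omega) (by omega)
  have h2p : 2*p ≤ p*p := Nat.mul_le_mul_right p hp2
  have hq4 : 4 ≤ q := by omega
  set s := q - 1 with hs_def
  have hq1 : q = s + 1 := by omega
  have hs1 : 1 ≤ s := by omega
  have hph : p^h = p*q := by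
    rw [hq_def, ← pow_succ']
    congr 1
    omega
  have hph2 : p^h = p*s + p := by rw [hph, hq1]; ring
  set r := p^h - 1 with hr_def
  have hr1 : p^h = r + 1 := by
    have : 1 ≤ p^h := Nat.one_le_pow h p (by omega)
    omega
  have hsr : s < r := by
    have : 2*q ≤ p*q := Nat.mul_le_mul_right q hp2
    omega
  have h8ph : 8 ≤ p^h := by
    calc 8 = 2^3 := by norm_num
    _ ≤ p^3 := Nat.pow_le_pow_left hp2 3
    _ ≤ p^h := Nat.pow_le_pow_right (by omega) (by omega)
  have hsph : ¬ (s ∣ (p^h - 1)) := by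
    intro hdvd
    have h1 : p^h - 1 = s*p + (p-1) := by
      have : p*s = s*p := by ring
      omega
    rw [h1] at hdvd
    have h3 : s ∣ (p-1) := (Nat.dvd_add_right (Dvd.intro p rfl)).mp hdvd
    have h4 : s ≤ p - 1 := Nat.le_of_dvd (by omega) h3
    omega
  -- the reference series
  set u : R⟦X⟧ := 1 + C (R := R) a * X^s + C (R := R) b * X^r with hu_set
  have hXs0 : constantCoeff (R := R) ((X : R⟦X⟧)^s) = 0 := by
    rw [map_pow, constantCoeff_X, zero_pow (by omega : s ≠ 0)]
  have hXr0 : constantCoeff (R := R) ((X : R⟦X⟧)^r) = 0 := by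
    rw [map_pow, constantCoeff_X, zero_pow (by omega : r ≠ 0)]
  have hcu : constantCoeff (R := R) u = 1 := by
    rw [hu_set]
    simp [hXs0, hXr0]
  have hXu : X * u = X + C (R := R) a * X^q + C (R := R) b * X^(p^h) := by
    have h1 : (X:R⟦X⟧) * X^s = X^q := by
      rw [← pow_succ']
      congr 1
      omega
    have h2 : (X:R⟦X⟧) * X^r = X^(p^h) := by
      rw [← pow_succ']
      congr 1
      omega
    calc X * u = X + C (R := R) a * (X*X^s) + C (R := R) b * (X*X^r) := by rw [hu_set]; ring
    _ = X + C (R := R) a * X^q + C (R := R) b * X^(p^h) := by rw [h1, h2]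
  have hfc : ∀ i ≤ p^h, coeff (R := R) i f = coeff (R := R) i (X*u) := by
    intro i hi
    have hlt : i < p^(h+1) := by
      have : p^h < p^(h+1) := Nat.pow_lt_pow_right hp.one_lt (by omega)
      omega
    rw [hXu]
    exact hf i hlt
  -- RHS coefficient extraction
  have hRHS : coeff (R := R) k (X + (∑ j ∈ Finset.range p,
        C (R := R) (algebraMap ℚ R ((-1 : ℚ) ^ (j + 1) / (j + 1) *
            ((q * (j + 1)).choose j : ℚ)) * a ^ (j + 1)) * X ^ (j * s + q))
        - C (R := R) b * X ^ p ^ h)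
      = (if k = 1 then 1 else 0)
        + (∑ j ∈ Finset.range p, if k = j*s + q then
            algebraMap ℚ R ((-1 : ℚ) ^ (j + 1) / (j + 1) *
              ((q * (j + 1)).choose j : ℚ)) * a ^ (j + 1) else 0)
        - (if k = p^h then b else 0) := by
    rw [map_sub, map_add, coeff_X, map_sum, coeff_C_mul_X_pow]
    congr 2
    exact Finset.sum_congr rfl (fun j _ => coeff_C_mul_X_pow _ _ _)
  rw [hRHS]
  rcases Nat.eq_zero_or_pos k with hk0 | hkpos
  · subst hk0
    rw [coeff_zero_eq_constantCoeff, hg0]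
    rw [if_neg (by omega), if_neg (by omega), Finset.sum_eq_zero (fun j _ => by
      rw [if_neg (by omega)])]
    ring
  · have hgk := coeff_g_eq u hcu g f (p^h) hfc hgf k hkpos hk
    rw [hgk, coeff_vD a b s r k hs1 hsr hkpos (by omega) u (1 + C (R := R) a * X^s) rfl hu_set]
    by_cases hdvd : s ∣ (k-1)
    · obtain ⟨t, ht⟩ := hdvd
      have htdiv : (k-1)/s = t := by rw [ht]; exact Nat.mul_div_cancel_left t (by omega)
      rcases Nat.eq_zero_or_pos t with ht0 | htpos
      · have hk1 : k = 1 := by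
          subst ht0
          simp at ht
          omega
        subst hk1
        rw [if_pos ⟨t, ht⟩, if_neg (by omega), if_neg (by omega), if_pos rfl,
          if_neg (by omega), Finset.sum_eq_zero (fun j _ => by rw [if_neg (by omega)])]
        norm_num
      · obtain ⟨t', rfl⟩ : ∃ t', t = t'+1 := ⟨t-1, by omega⟩
        have hk_eq : k = s*(t'+1) + 1 := by omega
        have hknph : k ≠ p^h := by
          intro hc
          exact hsph (hc ▸ ⟨t'+1, ht⟩)
        have htp : t'+1 ≤ p := by
          by_contra hcon
          have h5 : (p+1)*s ≤ (t'+1)*s := Nat.mul_le_mul_right s (by omega)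
          have h6 : (p+1)*s = p*s + s := by ring
          have h7 : (t'+1)*s = s*(t'+1) := by ring
          omega
        have e2 : k - 1 - s = s*t' := by
          have h8 : s*(t'+1) = s*t' + s := by ring
          omega
        have e3 : (k-1-s)/s = t' := by rw [e2]; exact Nat.mul_div_cancel_left t' (by omega)
        have e1 : k + (t'+1) = (t'+1)*q + 1 := by
          have h9 : (t'+1)*q = s*(t'+1) + (t'+1) := by rw [hq1]; ring
          omega
        have e4 : k + t' = (t'+1)*q := by
          have h9 : (t'+1)*q = s*(t'+1) + (t'+1) := by rw [hq1]; ring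
          omega
        have hsk : s ≤ k - 1 := by
          have : s*1 ≤ s*(t'+1) := Nat.mul_le_mul_left s (by omega)
          omega
        rw [if_pos ⟨t'+1, ht⟩, if_pos ⟨⟨t'+1, ht⟩, hsk⟩, if_neg (by omega),
          htdiv, e3, e1, e4, if_neg (by omega), if_neg hknph]
        rw [Finset.sum_eq_single_of_mem t' (Finset.mem_range.2 (by omega))]
        · rw [if_pos (by rw [hk_eq, hq1]; ring)]
          have hcast : ((s:R)+1) = (q:R) := by rw [hq1]; push_cast; ring
          rw [hcast]
          have hsc := scalar_id a q t' (by omega)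
          linear_combination hsc
        · intro j _ hne
          rw [if_neg ?_]
          intro hc
          have h10 : j*s + q = s*(j+1) + 1 := by rw [hq1]; ring
          have h11 : s*(t'+1) = s*(j+1) := by omega
          have h12 : t'+1 = j+1 := Nat.eq_of_mul_eq_mul_left (by omega) h11
          omega
    · rw [if_neg hdvd, if_neg (by tauto)]
      have hsumz : (∑ j ∈ Finset.range p, if k = j*s + q then
            algebraMap ℚ R ((-1 : ℚ) ^ (j + 1) / (j + 1) *
              ((q * (j + 1)).choose j : ℚ)) * a ^ (j + 1) else 0) = 0 := by
        refine Finset.sum_eq_zero (fun j _ => ?_)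
        rw [if_neg ?_]
        intro hc
        refine hdvd ⟨j+1, ?_⟩
        have h10 : j*s + q = s*(j+1) + 1 := by rw [hq1]; ring
        omega
      have hkne1 : k ≠ 1 := by
        intro hc
        exact hdvd (by rw [hc]; exact dvd_zero s)
      rw [hsumz, if_neg hkne1]
      by_cases hkph : k = p^h
      · rw [if_pos (by omega), if_pos hkph]
        ring
      · rw [if_neg (by omega), if_neg hkph]
        ring
end

section
/- Let p be a prime, h ≥ 1, and let A, B ∈ R[[x]] be power series over a commutative ring R of characteristic p, where x^a exactly divides A and x^b exactly divides B with a ≤ b. Then for any n ≥ 1, x^{(a(p^n - 1) + b)} divides the polynomial expression ((A+B)^{p^n} - A^{p^n} - B^{p^n}) computed as the reduction of the integral polynomial C_{p^n} evaluated at (A,B). -/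
open MvPolynomial PowerSeries

/-- Let `R` be a commutative ring of characteristic `p`, and `A, B ∈ R[[x]]` with
`x^a` exactly dividing `A` and `x^b` exactly dividing `B`, `a ≤ b`. Then
`x^{a(p^n - 1) + b}` divides `C_{p^n}(A,B)`, where `C_{p^n}` is the integral polynomial
with `p • C_{p^n} = (x+y)^{p^n} - x^{p^n} - y^{p^n}` evaluated at `(A, B)` (coefficients
reduced mod `p` via the `ℤ`-algebra structure of `R`). -/
theorem stmt_9 {R : Type*} [CommRing R] (p : ℕ) [Fact p.Prime] [CharP R p]
    (n a b : ℕ) (hn : 1 ≤ n) (A B : PowerSeries R)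
    (Q : MvPolynomial (Fin 2) ℤ)
    (hQ : (p : ℤ) • Q =
      (MvPolynomial.X 0 + MvPolynomial.X 1) ^ p ^ n
        - (MvPolynomial.X 0 : MvPolynomial (Fin 2) ℤ) ^ p ^ n - MvPolynomial.X 1 ^ p ^ n)
    (hA : (PowerSeries.X : PowerSeries R) ^ a ∣ A)
    (hA' : ¬ (PowerSeries.X : PowerSeries R) ^ (a + 1) ∣ A)
    (hB : (PowerSeries.X : PowerSeries R) ^ b ∣ B)
    (hB' : ¬ (PowerSeries.X : PowerSeries R) ^ (b + 1) ∣ B)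
    (hab : a ≤ b) :
    (PowerSeries.X : PowerSeries R) ^ (a * (p ^ n - 1) + b) ∣
      MvPolynomial.aeval ![A, B] Q := by
  have hp : p.Prime := Fact.out
  set N := p ^ n with hNdef
  have hN1 : 1 ≤ N := Nat.one_le_pow _ _ hp.pos
  set Q' : MvPolynomial (Fin 2) ℤ :=
    ∑ k ∈ Finset.Ioo 0 N,
      MvPolynomial.C ((N.choose k / p : ℕ) : ℤ) * (MvPolynomial.X 0) ^ k * (MvPolynomial.X 1) ^ (N - k) with hQ'def
  have key : (p : ℤ) • Q' =
      (MvPolynomial.X 0 + MvPolynomial.X 1 : MvPolynomial (Fin 2) ℤ) ^ N - MvPolynomial.X 0 ^ N - MvPolynomial.X 1 ^ N := by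
    have hrange : Finset.range (N + 1) = insert 0 (insert N (Finset.Ioo 0 N)) := by
      ext k; simp only [Finset.mem_range, Finset.mem_insert, Finset.mem_Ioo]; omega
    rw [add_pow, hrange, Finset.sum_insert (by simp only [Finset.mem_insert, Finset.mem_Ioo]; omega),
      Finset.sum_insert (by simp [Finset.mem_Ioo])]
    simp only [pow_zero, one_mul, Nat.choose_zero_right, Nat.choose_self, Nat.cast_one,
      mul_one, Nat.sub_zero, Nat.sub_self]
    have hterm : ∀ k ∈ Finset.Ioo 0 N,
        (MvPolynomial.X 0 : MvPolynomial (Fin 2) ℤ) ^ k * MvPolynomial.X 1 ^ (N - k) * ((N.choose k : ℕ) : MvPolynomial (Fin 2) ℤ) =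
        (p : ℤ) • (MvPolynomial.C ((N.choose k / p : ℕ) : ℤ) * (MvPolynomial.X 0) ^ k * (MvPolynomial.X 1) ^ (N - k)) := by
      intro k hk
      obtain ⟨hk0, hkN⟩ := Finset.mem_Ioo.mp hk
      have hdvd : p ∣ N.choose k := hp.dvd_choose_pow (by omega) (by omega)
      have : (p : ℤ) * ((N.choose k / p : ℕ) : ℤ) = (N.choose k : ℤ) := by
        rw [← Nat.cast_mul, Nat.mul_div_cancel' hdvd]
      have hcast : ((N.choose k : ℕ) : MvPolynomial (Fin 2) ℤ)
          = MvPolynomial.C ((N.choose k : ℕ) : ℤ) := by simp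
      rw [Algebra.smul_def, MvPolynomial.algebraMap_eq, hcast, ← this, map_mul]
      ring
    rw [Finset.sum_congr rfl hterm, ← Finset.smul_sum, ← hQ'def]
    ring
  have hQQ' : Q = Q' := by
    have h2 : MvPolynomial.C (p : ℤ) * Q = MvPolynomial.C (p : ℤ) * Q' := by
      have e : ∀ q : MvPolynomial (Fin 2) ℤ, MvPolynomial.C (p : ℤ) * q = (p : ℤ) • q := by
        intro q; rw [Algebra.smul_def, MvPolynomial.algebraMap_eq]
      rw [e, e, hQ, key]
    have hC : (MvPolynomial.C (p : ℤ) : MvPolynomial (Fin 2) ℤ) ≠ 0 := by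
      simp [MvPolynomial.C_eq_zero, hp.ne_zero]
    exact mul_left_cancel₀ hC h2
  rw [hQQ', hQ'def, map_sum]
  apply Finset.dvd_sum
  intro k hk
  obtain ⟨hk0, hkN⟩ := Finset.mem_Ioo.mp hk
  simp only [map_mul, map_pow, aeval_X, aeval_C,
    Matrix.cons_val_zero, Matrix.cons_val_one, Matrix.head_cons]
  rw [mul_assoc]
  apply Dvd.dvd.mul_left
  obtain ⟨m, hm⟩ : ∃ m, N = k + m + 1 := ⟨N - k - 1, by omega⟩
  have hNk : N - k = m + 1 := by omega
  have hle : a * (N - 1) + b ≤ a * k + b * (m + 1) := by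
    have h1 : N - 1 = k + m := by omega
    rw [h1]
    have h2 : a * m ≤ b * m := Nat.mul_le_mul_right m hab
    nlinarith
  calc (PowerSeries.X : PowerSeries R) ^ (a * (N - 1) + b)
      ∣ (PowerSeries.X : PowerSeries R) ^ (a * k + b * (m + 1)) := pow_dvd_pow _ hle
    _ ∣ A ^ k * B ^ (N - k) := by
        rw [hNk, pow_add, pow_mul, pow_mul]
        exact mul_dvd_mul (pow_dvd_pow_of_dvd hA k) (pow_dvd_pow_of_dvd hB (m + 1))
end

section
/- Over a ℚ-algebra, if log(x) = Σ_{i≥0} L_i x^{p^i} with L_0 = 1 satisfies the Araki-type relations p·L_n = Σ_{0 ≤ i ≤ n} L_i v_{n-i}^{p^i} with v_0 = p, v_i = 0 for 1 ≤ i ≤ h-2, v_{h-1} = u, v_h = 1, and v_i = 0 for i > h, then L_i = 0 for 1 ≤ i ≤ h-2, L_{h-1} = u/(p - p^{p^{h-1}}), and L_h = 1/(p - p^{p^h}). -/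
/-- Over `ℚ(u)`, if `log(x) = Σ_{i≥0} L_i x^{p^i}` with `L_0 = 1` satisfies the Araki
relations `p·L_n = Σ_{0≤i≤n} L_i v_{n-i}^{p^i}` with `v_0 = p`, `v_i = 0` for
`1 ≤ i ≤ h-2`, `v_{h-1} = u`, `v_h = 1` and `v_i = 0` for `i > h`, then `L_i = 0` for
`1 ≤ i ≤ h-2`, `L_{h-1} = u/(p - p^{p^{h-1}})` and `L_h = 1/(p - p^{p^h})`. -/
theorem stmt_10 (p h : ℕ) (hp : p.Prime) (hh : 2 < h)
    (v L : ℕ → RatFunc ℚ)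
    (hv0 : v 0 = (p : RatFunc ℚ))
    (hvmid : ∀ i, 1 ≤ i → i ≤ h - 2 → v i = 0)
    (hvh1 : v (h - 1) = RatFunc.X)
    (hvh : v h = 1)
    (hvtop : ∀ i, h < i → v i = 0)
    (hL0 : L 0 = 1)
    (hrec : ∀ n : ℕ, (p : RatFunc ℚ) * L n =
      ∑ i ∈ Finset.range (n + 1), L i * (v (n - i)) ^ p ^ i) :
    (∀ i, 1 ≤ i → i ≤ h - 2 → L i = 0) ∧
    L (h - 1) = RatFunc.X / ((p : RatFunc ℚ) - (p : RatFunc ℚ) ^ p ^ (h - 1)) ∧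
    L h = 1 / ((p : RatFunc ℚ) - (p : RatFunc ℚ) ^ p ^ h) := by
  have hp2 : 2 ≤ p := hp.two_le
  have hne : ∀ n : ℕ, 1 ≤ n → ((p : RatFunc ℚ) - (p : RatFunc ℚ) ^ p ^ n) ≠ 0 := by
    intro n hn hne0
    have h1 : (p : RatFunc ℚ) = ((p ^ p ^ n : ℕ) : RatFunc ℚ) := by
      push_cast
      linear_combination hne0
    haveI : CharZero (RatFunc ℚ) := charZero_of_injective_algebraMap (algebraMap ℚ (RatFunc ℚ)).injective
    have h2 : p = p ^ p ^ n := Nat.cast_injective h1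
    have h3 : p < p ^ p ^ n := by
      calc p = p ^ 1 := (pow_one p).symm
        _ < p ^ p ^ n := Nat.pow_lt_pow_right hp.one_lt
            (by calc 1 < p := hp.one_lt
                  _ = p ^ 1 := (pow_one p).symm
                  _ ≤ p ^ n := Nat.pow_le_pow_right (by omega) hn)
    omega
  have key : ∀ n : ℕ, ((p : RatFunc ℚ) - (p : RatFunc ℚ) ^ p ^ n) * L n
      = ∑ i ∈ Finset.range n, L i * (v (n - i)) ^ p ^ i := by
    intro n
    have h1 := hrec n
    rw [Finset.sum_range_succ, Nat.sub_self, hv0] at h1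
    linear_combination h1
  have hz : ∀ i, 1 ≤ i → i ≤ h - 2 → L i = 0 := by
    intro n hn1 hn2
    have hk := key n
    have hsum : ∑ i ∈ Finset.range n, L i * (v (n - i)) ^ p ^ i = 0 := by
      apply Finset.sum_eq_zero
      intro i hi
      rw [Finset.mem_range] at hi
      rw [hvmid (n - i) (by omega) (by omega),
        zero_pow (pow_ne_zero i (by omega : p ≠ 0)), mul_zero]
    rw [hsum] at hk
    exact (mul_eq_zero.mp hk).resolve_left (hne n hn1)
  refine ⟨hz, ?_, ?_⟩
  · have hk := key (h - 1)
    have hsum : ∑ i ∈ Finset.range (h - 1), L i * (v (h - 1 - i)) ^ p ^ i = RatFunc.X := by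
      rw [Finset.sum_eq_single 0]
      · simp [hL0, hvh1]
      · intro i hi h0
        rw [Finset.mem_range] at hi
        rw [hz i (by omega) (by omega)]
        ring
      · intro h0
        exact absurd (Finset.mem_range.mpr (by omega)) h0
    rw [hsum] at hk
    rw [eq_div_iff (hne (h - 1) (by omega))]
    linear_combination hk
  · have hk := key h
    have hsum : ∑ i ∈ Finset.range h, L i * (v (h - i)) ^ p ^ i = 1 := by
      rw [Finset.sum_eq_single 0]
      · simp [hL0, hvh]
      · intro i hi h0
        rw [Finset.mem_range] at hi
        by_cases hih : i = h - 1
        · rw [hih]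
          have : h - (h - 1) = 1 := by omega
          rw [this, hvmid 1 (by omega) (by omega),
            zero_pow (pow_ne_zero (h - 1) (by omega : p ≠ 0)), mul_zero]
        · rw [hz i (by omega) (by omega)]
          ring
      · intro h0
        exact absurd (Finset.mem_range.mpr (by omega)) h0
    rw [hsum] at hk
    rw [eq_div_iff (hne h (by omega))]
    linear_combination hk
end
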